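/- Let π ∈ I_n(3412). Then the number of occurrences of the consecutive pattern 312 in π (indices i with π_{i+1} < π_{i+2} < π_i) equals the total number of occurrences in the Motzkin path Ψ(π) of the three-letter factors UHH and UHU. -/

import Mathlib

open scoped Classical

noncomputable section

/-- Steps of a Motzkin path: up, down, horizontal. -/
inductive Step : Type
  | U : Step
  | D : Step
  | H : Step
  deriving DecidableEq

/-- Steps of a bicolored Motzkin path: up, down, horizontal of color `c₁`,
horizontal of color `c₂`. -/
inductive CStep : Type
  | U : CStep
  | D : CStep
  | H : CStep
  | Ht : CStep
  deriving DecidableEq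

/-- A word over `{U,D,H}` is a Motzkin word if the numbers of `U`'s and `D`'s agree
and every prefix has at least as many `U`'s as `D`'s. -/
def IsMotzkin (w : List Step) : Prop :=
  w.count Step.U = w.count Step.D ∧
  ∀ k, (w.take k).count Step.D ≤ (w.take k).count Step.U

/-- The `y`-coordinate of the lattice point reached after the first `i` steps. -/
def levelAt (w : List Step) (i : ℕ) : ℕ :=
  (w.take i).count Step.U - (w.take i).count Step.D

/-- The height of the `i`-th step (0-indexed): the `y`-coordinate of its ending
point for a down step, of its starting point otherwise. -/
def heightAt (w : List Step) (i : ℕ) : ℕ :=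
  if w.getD i Step.H = Step.D then levelAt w (i + 1) else levelAt w i

/-- Twice the area between the path and the `x`-axis (trapezoid rule). -/
def twoArea (w : List Step) : ℕ :=
  ∑ i ∈ Finset.range w.length, (levelAt w i + levelAt w (i + 1))

/-- The number of occurrences of `p` as a factor (subword of consecutive letters) of `w`. -/
def occFactor (p w : List Step) : ℕ :=
  ((Finset.range w.length).filter fun i => p <+: w.drop i).card

/-- The `y`-coordinate reached after `i` steps, bicolored version. -/
def cLevelAt (w : List CStep) (i : ℕ) : ℕ :=
  (w.take i).count CStep.U - (w.take i).count CStep.D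

/-- The height of the `i`-th step, bicolored version. -/
def cHeightAt (w : List CStep) (i : ℕ) : ℕ :=
  if w.getD i CStep.H = CStep.D then cLevelAt w (i + 1) else cLevelAt w i

/-- A bicolored Motzkin word: a Motzkin word whose horizontal steps have two possible
colors (`H` and `Ht`), horizontal steps at height `0` not being allowed to have the
second color. -/
def IsBicoloredMotzkin (w : List CStep) : Prop :=
  w.count CStep.U = w.count CStep.D ∧
  (∀ k, (w.take k).count CStep.D ≤ (w.take k).count CStep.U) ∧
  (∀ i < w.length, w.getD i CStep.H = CStep.Ht → cHeightAt w i ≠ 0)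

/-- A histoire de Laguerre of length `n`: a bicolored Motzkin path of length `n`
together with a sequence `l` of nonnegative integers such that `l i ≤ h i` for each
step, the inequality being strict for the horizontal steps of the second color
(the "suitable constraints" of De Medicis and Viennot). -/
def IsLaguerre (n : ℕ) (dl : List CStep × List ℕ) : Prop :=
  dl.1.length = n ∧ dl.2.length = n ∧ IsBicoloredMotzkin dl.1 ∧
  ∀ i < n, dl.2.getD i 0 ≤ cHeightAt dl.1 i ∧
    (dl.1.getD i CStep.H = CStep.Ht → dl.2.getD i 0 < cHeightAt dl.1 i)

/-- A labelled Motzkin path of length `n`: a Motzkin path whose down steps carry a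
label not exceeding their height, all other steps carrying the label `0` (unlabelled). -/
def IsLabelledMotzkin (n : ℕ) (dl : List Step × List ℕ) : Prop :=
  dl.1.length = n ∧ dl.2.length = n ∧ IsMotzkin dl.1 ∧
  ∀ i < n, (dl.1.getD i Step.H = Step.D → dl.2.getD i 0 ≤ heightAt dl.1 i) ∧
    (dl.1.getD i Step.H ≠ Step.D → dl.2.getD i 0 = 0)

/-- The embedding of plain Motzkin steps into bicolored steps. -/
def Step.toC : Step → CStep
  | Step.U => CStep.U
  | Step.D => CStep.D
  | Step.H => CStep.H

/-- The value (as a natural number, 0-indexed) of the permutation `π` at the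
(0-indexed) position `i`; junk value `0` out of range. -/
def pv {n : ℕ} (π : Equiv.Perm (Fin n)) (i : ℕ) : ℕ :=
  if h : i < n then (π ⟨i, h⟩ : Fin n).val else 0

/-- Position `p` starts an ascending run of `π` (in one-line notation):
either `p = 0` or there is a descent just before `p`. -/
def RunStartAt {n : ℕ} (π : Equiv.Perm (Fin n)) (p : Fin n) : Prop :=
  ∀ q : Fin n, (q : ℕ) + 1 = (p : ℕ) → π p < π q

/-- Position `p` ends an ascending run of `π`. -/
def RunEndAt {n : ℕ} (π : Equiv.Perm (Fin n)) (p : Fin n) : Prop :=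
  ∀ q : Fin n, (p : ℕ) + 1 = (q : ℕ) → π q < π p

/-- The step of the bicolored Motzkin path `Γ(π)` associated with the value `v`:
`U` if `v` is a head, `D` if it is a tail, `H` if it is a head-tail, `Ht` if it
is a boarder. -/
def gammaStep {n : ℕ} (π : Equiv.Perm (Fin n)) (v : Fin n) : CStep :=
  if RunStartAt π (π.symm v) then
    if RunEndAt π (π.symm v) then CStep.H else CStep.U
  else
    if RunEndAt π (π.symm v) then CStep.D else CStep.Ht

/-- The label of `Γ(π)` at the value `v`: the number of ascending runs of `π`
(determined by the position `pq.1` of their first element and the position `pq.2`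
of their last element) whose first value is `< v`, whose last value is `> v`, and
whose last element precedes `v` in `π`. -/
def gammaLabel {n : ℕ} (π : Equiv.Perm (Fin n)) (v : Fin n) : ℕ :=
  (Finset.univ.filter fun pq : Fin n × Fin n =>
    RunStartAt π pq.1 ∧ RunEndAt π pq.2 ∧ pq.1 ≤ pq.2 ∧
    (∀ r : Fin n, pq.1 ≤ r → r < pq.2 → ¬ RunEndAt π r) ∧
    π pq.1 < v ∧ v < π pq.2 ∧ pq.2 < π.symm v).card

/-- The map `Γ` from permutations to pairs (bicolored Motzkin path, label sequence). -/
def Gamma {n : ℕ} (π : Equiv.Perm (Fin n)) : List CStep × List ℕ :=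
  (List.ofFn fun v => gammaStep π v, List.ofFn fun v => gammaLabel π v)

/-- The (uncolored) Motzkin path `Γ(π)` for permutations with no boarders:
`U` for heads, `D` for tails, `H` for head-tails. -/
def gammaPath {n : ℕ} (π : Equiv.Perm (Fin n)) : List Step :=
  List.ofFn fun v : Fin n =>
    if RunStartAt π (π.symm v) then
      if RunEndAt π (π.symm v) then Step.H else Step.U
    else
      if RunEndAt π (π.symm v) then Step.D else Step.H

/-- `π` is an involution. -/
def IsInvolution {n : ℕ} (π : Equiv.Perm (Fin n)) : Prop :=
  ∀ x, π (π x) = x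

/-- The Motzkin path `Ψ(π)` of an involution `π`: `H` at fixed points, `U` at the
smaller element of a 2-cycle, `D` at the larger element of a 2-cycle. -/
def psiWord {n : ℕ} (π : Equiv.Perm (Fin n)) : List Step :=
  List.ofFn fun v : Fin n =>
    if π v = v then Step.H else if v < π v then Step.U else Step.D

/-- The label of `Ψ(π)` at `v`: if `v` is the larger element of a 2-cycle
`(π v, v)`, the number of 2-cycles `(x, π x)` with `π v < x < v < π x`; `0` otherwise. -/
def psiLabel {n : ℕ} (π : Equiv.Perm (Fin n)) (v : Fin n) : ℕ :=
  if π v < v then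
    (Finset.univ.filter fun x : Fin n => π v < x ∧ x < v ∧ v < π x).card
  else 0

/-- The map `Ψ` from involutions to labelled Motzkin paths. -/
def Psi {n : ℕ} (π : Equiv.Perm (Fin n)) : List Step × List ℕ :=
  (psiWord π, List.ofFn fun v => psiLabel π v)

/-- Number of inversions of `π`. -/
def invCount {n : ℕ} (π : Equiv.Perm (Fin n)) : ℕ :=
  (Finset.univ.filter fun p : Fin n × Fin n => p.1 < p.2 ∧ π p.2 < π p.1).card

/-- Number of coinversions of `π`. -/
def coinvCount {n : ℕ} (π : Equiv.Perm (Fin n)) : ℕ :=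
  (Finset.univ.filter fun p : Fin n × Fin n => p.1 < p.2 ∧ π p.1 < π p.2).card

/-- Number of descents of `π`. -/
def desCount {n : ℕ} (π : Equiv.Perm (Fin n)) : ℕ :=
  ((Finset.range (n - 1)).filter fun i => pv π (i + 1) < pv π i).card

/-- Number of ascents of `π`. -/
def ascCount {n : ℕ} (π : Equiv.Perm (Fin n)) : ℕ :=
  ((Finset.range (n - 1)).filter fun i => pv π i < pv π (i + 1)).card

/-- Number of fixed points of `π`. -/
def fixCount {n : ℕ} (π : Equiv.Perm (Fin n)) : ℕ :=
  (Finset.univ.filter fun i : Fin n => π i = i).card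

/-- Number of occurrences of the consecutive pattern 123 in `π`. -/
def occC123 {n : ℕ} (π : Equiv.Perm (Fin n)) : ℕ :=
  ((Finset.range (n - 2)).filter fun i =>
    pv π i < pv π (i + 1) ∧ pv π (i + 1) < pv π (i + 2)).card

/-- Number of occurrences of the consecutive pattern 132 in `π`. -/
def occC132 {n : ℕ} (π : Equiv.Perm (Fin n)) : ℕ :=
  ((Finset.range (n - 2)).filter fun i =>
    pv π i < pv π (i + 2) ∧ pv π (i + 2) < pv π (i + 1)).card

/-- Number of occurrences of the consecutive pattern 213 in `π`. -/
def occC213 {n : ℕ} (π : Equiv.Perm (Fin n)) : ℕ :=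
  ((Finset.range (n - 2)).filter fun i =>
    pv π (i + 1) < pv π i ∧ pv π i < pv π (i + 2)).card

/-- Number of occurrences of the consecutive pattern 231 in `π`. -/
def occC231 {n : ℕ} (π : Equiv.Perm (Fin n)) : ℕ :=
  ((Finset.range (n - 2)).filter fun i =>
    pv π (i + 2) < pv π i ∧ pv π i < pv π (i + 1)).card

/-- Number of occurrences of the consecutive pattern 312 in `π`. -/
def occC312 {n : ℕ} (π : Equiv.Perm (Fin n)) : ℕ :=
  ((Finset.range (n - 2)).filter fun i =>
    pv π (i + 1) < pv π (i + 2) ∧ pv π (i + 2) < pv π i).card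

/-- Number of occurrences of the consecutive pattern 321 in `π`. -/
def occC321 {n : ℕ} (π : Equiv.Perm (Fin n)) : ℕ :=
  ((Finset.range (n - 2)).filter fun i =>
    pv π (i + 2) < pv π (i + 1) ∧ pv π (i + 1) < pv π i).card

/-- `π` contains the classical pattern 132. -/
def Contains132 {n : ℕ} (π : Equiv.Perm (Fin n)) : Prop :=
  ∃ i j k : Fin n, i < j ∧ j < k ∧ π i < π k ∧ π k < π j

/-- `π` contains the consecutive pattern 123. -/
def ContainsC123 {n : ℕ} (π : Equiv.Perm (Fin n)) : Prop :=
  ∃ i j k : Fin n, (i : ℕ) + 1 = (j : ℕ) ∧ (j : ℕ) + 1 = (k : ℕ) ∧ π i < π j ∧ π j < π k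

/-- `π` contains the classical pattern 3412. -/
def Contains3412 {n : ℕ} (π : Equiv.Perm (Fin n)) : Prop :=
  ∃ i₁ i₂ i₃ i₄ : Fin n, i₁ < i₂ ∧ i₂ < i₃ ∧ i₃ < i₄ ∧
    π i₃ < π i₄ ∧ π i₄ < π i₁ ∧ π i₁ < π i₂

/-- `π` contains the vincular pattern 1-2̲3̲. -/
def Contains1_23 {n : ℕ} (π : Equiv.Perm (Fin n)) : Prop :=
  ∃ i j k : Fin n, i < j ∧ (j : ℕ) + 1 = (k : ℕ) ∧ π i < π j ∧ π j < π k

/-- `π` contains the vincular pattern 1-3̲2̲. -/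
def Contains1_32 {n : ℕ} (π : Equiv.Perm (Fin n)) : Prop :=
  ∃ i j k : Fin n, i < j ∧ (j : ℕ) + 1 = (k : ℕ) ∧ π i < π k ∧ π k < π j

/-- `w` is the one-line notation of a permutation of `{0, …, n-1}`. -/
def IsPermWord (n : ℕ) (w : List ℕ) : Prop :=
  List.Perm w (List.range n)

/-- Position `p` starts an ascending run of the word `w`. -/
def wRunStart (w : List ℕ) (p : ℕ) : Prop :=
  p = 0 ∨ w.getD p 0 < w.getD (p - 1) 0

/-- Position `p` ends an ascending run of the word `w`. -/
def wRunEnd (w : List ℕ) (p : ℕ) : Prop :=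
  p + 1 = w.length ∨ w.getD (p + 1) 0 < w.getD p 0

/-- The step of `Γ(w)` associated with the value `v`. -/
def wGammaStep (w : List ℕ) (v : ℕ) : CStep :=
  if wRunStart w (w.idxOf v) then
    if wRunEnd w (w.idxOf v) then CStep.H else CStep.U
  else
    if wRunEnd w (w.idxOf v) then CStep.D else CStep.Ht

/-- The label of `Γ(w)` at the value `v`. -/
def wGammaLabel (w : List ℕ) (v : ℕ) : ℕ :=
  ((Finset.range w.length ×ˢ Finset.range w.length).filter fun pq =>
    wRunStart w pq.1 ∧ wRunEnd w pq.2 ∧ pq.1 ≤ pq.2 ∧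
    (∀ r, pq.1 ≤ r → r < pq.2 → ¬ wRunEnd w r) ∧
    w.getD pq.1 0 < v ∧ v < w.getD pq.2 0 ∧ pq.2 < w.idxOf v).card

/-- The map `Γ` on one-line words. -/
def wGamma (w : List ℕ) : List CStep × List ℕ :=
  ((List.range w.length).map (wGammaStep w), (List.range w.length).map (wGammaLabel w))

/-- The word `w` contains the vincular pattern 1-2̲3̲. -/
def wContains1_23 (w : List ℕ) : Prop :=
  ∃ i j, i < j ∧ j + 1 < w.length ∧
    w.getD i 0 < w.getD j 0 ∧ w.getD j 0 < w.getD (j + 1) 0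

/-- The word `w` contains the vincular pattern 1-3̲2̲. -/
def wContains1_32 (w : List ℕ) : Prop :=
  ∃ i j, i < j ∧ j + 1 < w.length ∧
    w.getD i 0 < w.getD (j + 1) 0 ∧ w.getD (j + 1) 0 < w.getD j 0

/-- The word `w` contains the classical pattern 132. -/
def wContains132 (w : List ℕ) : Prop :=
  ∃ i j k, i < j ∧ j < k ∧ k < w.length ∧
    w.getD i 0 < w.getD k 0 ∧ w.getD k 0 < w.getD j 0

/-- The word `w` contains the consecutive pattern 123. -/
def wContainsC123 (w : List ℕ) : Prop :=
  ∃ i, i + 2 < w.length ∧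
    w.getD i 0 < w.getD (i + 1) 0 ∧ w.getD (i + 1) 0 < w.getD (i + 2) 0

/-- The one-line word of the Foata image `F(π)` of an involution `π`: write `π` in
standard cycle notation (each cycle with its least element first, cycles in
decreasing order of their least elements) and erase the parentheses. -/
def foataWord {n : ℕ} (π : Equiv.Perm (Fin n)) : List ℕ :=
  (((List.range n).reverse).map fun m =>
    if pv π m = m then [m]
    else if m < pv π m then [m, pv π m]
    else ([] : List ℕ)).flatten

/-- The number of long tunnels of `d`: occurrences of factors `U α D` with `α` a
nonempty Motzkin word. -/
def longTunnelCount (d : List Step) : ℕ :=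
  ((Finset.range d.length ×ˢ Finset.range d.length).filter fun ij =>
    ij.1 + 1 < ij.2 ∧ d.getD ij.1 Step.H = Step.U ∧ d.getD ij.2 Step.H = Step.D ∧
    IsMotzkin ((d.drop (ij.1 + 1)).take (ij.2 - ij.1 - 1))).card

/-- The number of weak valleys of `d`: occurrences of the factors `HH, HU, DH, DU`. -/
def weakValleyCount (d : List Step) : ℕ :=
  occFactor [Step.H, Step.H] d + occFactor [Step.H, Step.U] d +
  occFactor [Step.D, Step.H] d + occFactor [Step.D, Step.U] d

end

private lemma prefix3_iff (a b c : Step) (l : List Step) :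
    [a, b, c] <+: l ↔ 2 < l.length ∧ l.getD 0 Step.H = a ∧ l.getD 1 Step.H = b ∧
      l.getD 2 Step.H = c := by
  match l with
  | [] => simp
  | [x] => simp [List.cons_prefix_cons]
  | [x, y] => simp [List.cons_prefix_cons]
  | x :: y :: z :: r =>
    simp only [List.cons_prefix_cons, List.nil_prefix, and_true, List.length_cons,
      List.getD_cons_zero, List.getD_cons_succ]
    constructor
    · rintro ⟨h1, h2, h3⟩; exact ⟨by omega, h1.symm, h2.symm, h3.symm⟩
    · rintro ⟨_, h1, h2, h3⟩; exact ⟨h1.symm, h2.symm, h3.symm⟩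

private lemma getD_drop' (w : List Step) (i j : ℕ) (h : i + j < w.length) :
    (w.drop i).getD j Step.H = w.getD (i + j) Step.H := by
  rw [List.getD_eq_getElem _ _ (by rw [List.length_drop]; omega),
    List.getD_eq_getElem _ _ h]
  simp [List.getElem_drop]

private lemma occ_at (a b c : Step) (w : List Step) (i : ℕ) :
    [a, b, c] <+: w.drop i ↔ i + 2 < w.length ∧ w.getD i Step.H = a ∧
      w.getD (i + 1) Step.H = b ∧ w.getD (i + 2) Step.H = c := by
  rw [prefix3_iff]
  constructor
  · rintro ⟨hl, h0, h1, h2⟩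
    rw [List.length_drop] at hl
    have hi : i + 2 < w.length := by omega
    rw [getD_drop' w i 0 (by omega), getD_drop' w i 1 (by omega),
      getD_drop' w i 2 (by omega)] at *
    exact ⟨hi, h0, h1, h2⟩
  · rintro ⟨hi, h0, h1, h2⟩
    rw [getD_drop' w i 0 (by omega), getD_drop' w i 1 (by omega),
      getD_drop' w i 2 (by omega)]
    exact ⟨by rw [List.length_drop]; omega, h0, h1, h2⟩

private lemma psi_getD {n : ℕ} (π : Equiv.Perm (Fin n)) (j : ℕ) (h : j < n) :
    (psiWord π).getD j Step.H =
      if π ⟨j, h⟩ = ⟨j, h⟩ then Step.H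
      else if (⟨j, h⟩ : Fin n) < π ⟨j, h⟩ then Step.U else Step.D := by
  rw [psiWord, List.getD_eq_getElem _ _ (by simpa using h), List.getElem_ofFn]

private lemma pv_eq {n : ℕ} (π : Equiv.Perm (Fin n)) (j : ℕ) (h : j < n) :
    pv π j = ((π ⟨j, h⟩ : Fin n) : ℕ) := dif_pos h

private lemma pv_zero {n : ℕ} (π : Equiv.Perm (Fin n)) (j : ℕ) (h : ¬ j < n) :
    pv π j = 0 := dif_neg h

private lemma decodeU {n : ℕ} (π : Equiv.Perm (Fin n)) (j : ℕ) (h : j < n) :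
    (psiWord π).getD j Step.H = Step.U ↔ j < pv π j := by
  rw [psi_getD π j h, pv_eq π j h]
  by_cases h1 : π ⟨j, h⟩ = ⟨j, h⟩
  · have hv : ((π ⟨j, h⟩ : Fin n) : ℕ) = j := by rw [h1]
    simp [h1, hv]
  · by_cases h2 : (⟨j, h⟩ : Fin n) < π ⟨j, h⟩
    · have hv := Fin.lt_def.mp h2
      simp only [if_neg h1, if_pos h2]
      simp only [Fin.mk_lt_mk] at hv ⊢
      simpa using hv
    · have hv : ((π ⟨j, h⟩ : Fin n) : ℕ) < j := by
        rcases lt_trichotomy (π ⟨j, h⟩) (⟨j, h⟩ : Fin n) with hh | hh | hh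
        · exact Fin.lt_def.mp hh
        · exact absurd hh h1
        · exact absurd hh h2
      simp only [if_neg h1, if_neg h2]
      constructor
      · intro hx; exact absurd hx (by simp)
      · intro hx; omega

private lemma decodeH {n : ℕ} (π : Equiv.Perm (Fin n)) (j : ℕ) (h : j < n) :
    (psiWord π).getD j Step.H = Step.H ↔ pv π j = j := by
  rw [psi_getD π j h, pv_eq π j h]
  by_cases h1 : π ⟨j, h⟩ = ⟨j, h⟩
  · have hv : ((π ⟨j, h⟩ : Fin n) : ℕ) = j := by rw [h1]
    simp [h1, hv]
  · have hv : ((π ⟨j, h⟩ : Fin n) : ℕ) ≠ j := by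
      intro e; exact h1 (Fin.ext e)
    by_cases h2 : (⟨j, h⟩ : Fin n) < π ⟨j, h⟩ <;>
      simp only [if_neg h1, if_pos, if_neg, h2, if_true, if_false] <;>
      [skip; skip] <;>
      · constructor
        · intro hx; exact absurd hx (by simp)
        · intro hx; exact absurd hx hv

private lemma key312 {n : ℕ} (π : Equiv.Perm (Fin n)) (h₁ : IsInvolution π)
    (h₂ : ¬ Contains3412 π) (i : ℕ) (h : i + 2 < n) :
    (pv π (i + 1) < pv π (i + 2) ∧ pv π (i + 2) < pv π i) ↔
      (i < pv π i ∧ pv π (i + 1) = i + 1 ∧ i + 2 ≤ pv π (i + 2)) := by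
  have hI : i < n := by omega
  have hI1 : i + 1 < n := by omega
  set I : Fin n := ⟨i, hI⟩ with hIdef
  set I1 : Fin n := ⟨i + 1, hI1⟩ with hI1def
  set I2 : Fin n := ⟨i + 2, h⟩ with hI2def
  rw [pv_eq π i hI, pv_eq π (i + 1) hI1, pv_eq π (i + 2) h]
  set a := π I with ha
  set b := π I1 with hb
  set c := π I2 with hc
  have hpa : π a = I := by rw [ha]; exact h₁ I
  have hpb : π b = I1 := by rw [hb]; exact h₁ I1
  have hpc : π c = I2 := by rw [hc]; exact h₁ I2
  have hIv : (I : ℕ) = i := rfl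
  have hI1v : (I1 : ℕ) = i + 1 := rfl
  have hI2v : (I2 : ℕ) = i + 2 := rfl
  constructor
  · rintro ⟨hbc, hca⟩
    have hbv : (b : ℕ) = i + 1 := by
      by_contra hne
      rcases Nat.lt_or_ge (b : ℕ) (i + 1) with hlt | hge
      · rcases Nat.eq_or_lt_of_le (Nat.lt_succ_iff.mp hlt) with hbi | hbi
        · -- b = i : then a = I1, contradiction
          have hbI : b = I := Fin.ext hbi
          have haI1 : a = I1 := by rw [ha, ← hbI, hpb]
          have : (a : ℕ) = i + 1 := by rw [haI1]
          omega
        · -- (b:ℕ) < i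
          rcases Nat.lt_or_ge (a : ℕ) (i + 2) with halt | hage
          · -- a ≤ i+1; exclude a = i+1
            have ha1 : (a : ℕ) ≠ i + 1 := by
              intro hav
              have haI1 : a = I1 := Fin.ext hav
              have hIb : I = b := by rw [← hpa, haI1, ← hb]
              have : (b : ℕ) = i := by rw [← hIb]
              omega
            -- now (a:ℕ) ≤ i, so (c:ℕ) < i; witness (b, c, I1, I2)
            exact h₂ ⟨b, c, I1, I2,
              Fin.lt_def.mpr hbc,
              Fin.lt_def.mpr (by omega),
              Fin.lt_def.mpr (by omega),
              by rw [← hb, ← hc]; exact Fin.lt_def.mpr hbc,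
              by rw [← hc, hpb]; exact Fin.lt_def.mpr (by omega),
              by rw [hpb, hpc]; exact Fin.lt_def.mpr (by omega)⟩
          · -- a ≥ i+2; witness (b, I, I1, a)
            exact h₂ ⟨b, I, I1, a,
              Fin.lt_def.mpr (by omega),
              Fin.lt_def.mpr (by omega),
              Fin.lt_def.mpr (by omega),
              by rw [← hb, hpa]; exact Fin.lt_def.mpr (by omega),
              by rw [hpa, hpb]; exact Fin.lt_def.mpr (by omega),
              by rw [hpb, ← ha]; exact Fin.lt_def.mpr (by omega)⟩
      · -- (b:ℕ) ≥ i+2 (since ≠ i+1)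
        have hb2 : (b : ℕ) ≥ i + 2 := by omega
        have hb3 : (b : ℕ) ≥ i + 3 := by
          rcases Nat.eq_or_lt_of_le hb2 with hbe | hbl
          · exfalso
            have hbI2 : b = I2 := Fin.ext hbe.symm
            have hcI1 : c = I1 := by rw [hc, ← hbI2, hpb]
            have : (c : ℕ) = i + 1 := by rw [hcI1]
            omega
          · omega
        -- witness (I1, I2, b, c)
        exact h₂ ⟨I1, I2, b, c,
          Fin.lt_def.mpr (by omega),
          Fin.lt_def.mpr (by omega),
          Fin.lt_def.mpr hbc,
          by rw [hpb, hpc]; exact Fin.lt_def.mpr (by omega),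
          by rw [hpc, ← hb]; exact Fin.lt_def.mpr (by omega),
          by rw [← hb, ← hc]; exact Fin.lt_def.mpr hbc⟩
    exact ⟨by omega, hbv, by omega⟩
  · rintro ⟨hia, hbv, hc2⟩
    refine ⟨by omega, ?_⟩
    have hbI1 : b = I1 := Fin.ext hbv
    have ha1 : (a : ℕ) ≠ i + 1 := by
      intro hav
      have haI1 : a = I1 := Fin.ext hav
      have : I = I1 := π.injective (by rw [← ha, ← hb, haI1, hbI1])
      have : (i : ℕ) = i + 1 := congrArg Fin.val this
      omega
    have ha2 : (a : ℕ) ≠ i + 2 := by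
      intro hav
      have haI2 : a = I2 := Fin.ext hav
      have hcI : c = I := by rw [hc, ← haI2, hpa]
      have : (c : ℕ) = i := by rw [hcI]
      omega
    have hac : a ≠ c := by
      intro e
      have : I = I2 := by rw [← hpa, e, hpc]
      have : (i : ℕ) = i + 2 := congrArg Fin.val this
      omega
    by_contra hnac
    push_neg at hnac
    have hacv : (a : ℕ) < (c : ℕ) :=
      lt_of_le_of_ne hnac (fun e => hac (Fin.ext e))
    -- witness (I, I2, a, c)
    exact h₂ ⟨I, I2, a, c,
      Fin.lt_def.mpr (by omega),
      Fin.lt_def.mpr (by omega),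
      Fin.lt_def.mpr hacv,
      by rw [hpa, hpc]; exact Fin.lt_def.mpr (by omega),
      by rw [hpc, ← ha]; exact Fin.lt_def.mpr (by omega),
      by rw [← ha, ← hc]; exact Fin.lt_def.mpr hacv⟩

private lemma rhs_decode {n : ℕ} (π : Equiv.Perm (Fin n)) (j : ℕ) (h : j + 2 < n) :
    ([Step.U, Step.H, Step.H] <+: (psiWord π).drop j ∨
     [Step.U, Step.H, Step.U] <+: (psiWord π).drop j) ↔
    (j < pv π j ∧ pv π (j + 1) = j + 1 ∧ j + 2 ≤ pv π (j + 2)) := by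
  have hlen : (psiWord π).length = n := by rw [psiWord, List.length_ofFn]
  rw [occ_at, occ_at, hlen]
  have d0 := decodeU π j (by omega)
  have d1 := decodeH π (j + 1) (by omega)
  have d2H := decodeH π (j + 2) h
  have d2U := decodeU π (j + 2) h
  constructor
  · rintro (⟨_, hU, hH, hx⟩ | ⟨_, hU, hH, hx⟩)
    · exact ⟨d0.mp hU, d1.mp hH, by have := d2H.mp hx; omega⟩
    · exact ⟨d0.mp hU, d1.mp hH, by have := d2U.mp hx; omega⟩
  · rintro ⟨hU, hH, hx⟩
    rcases Nat.eq_or_lt_of_le hx with he | hl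
    · exact Or.inl ⟨h, d0.mpr hU, d1.mpr hH, d2H.mpr he.symm⟩
    · exact Or.inr ⟨h, d0.mpr hU, d1.mpr hH, d2U.mpr hl⟩

/-- For `π ∈ I_n(3412)`: the number of occurrences of the
consecutive pattern 312 in `π` equals the total number of occurrences in `Ψ(π)` of
the factors `UHH` and `UHU`. -/
theorem occC312_eq_factors (n : ℕ) (π : Equiv.Perm (Fin n))
    (h₁ : IsInvolution π) (h₂ : ¬ Contains3412 π) :
    occC312 π =
      occFactor [Step.U, Step.H, Step.H] (psiWord π) +
      occFactor [Step.U, Step.H, Step.U] (psiWord π) := by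
  classical
  have hlen : (psiWord π).length = n := by rw [psiWord, List.length_ofFn]
  have hP2 : ∀ j, (pv π (j + 1) < pv π (j + 2) ∧ pv π (j + 2) < pv π j) → j + 2 < n := by
    intro j hp
    by_contra hc
    rw [pv_zero π (j + 2) hc] at hp
    omega
  have hdisj : Disjoint
      ((Finset.range (psiWord π).length).filter fun i =>
        [Step.U, Step.H, Step.H] <+: (psiWord π).drop i)
      ((Finset.range (psiWord π).length).filter fun i =>
        [Step.U, Step.H, Step.U] <+: (psiWord π).drop i) := by
    rw [Finset.disjoint_filter]
    intro x _ hx1 hx2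
    rw [occ_at] at hx1 hx2
    have e1 := hx1.2.2.2
    have e2 := hx2.2.2.2
    rw [e1] at e2
    exact absurd e2 (by simp)
  rw [occC312, occFactor, occFactor, ← Finset.card_union_of_disjoint hdisj,
    ← Finset.filter_or, hlen]
  congr 1
  ext j
  simp only [Finset.mem_filter, Finset.mem_range]
  constructor
  · rintro ⟨hj, hp⟩
    have h2 : j + 2 < n := hP2 j hp
    exact ⟨by omega, (rhs_decode π j h2).mpr ((key312 π h₁ h₂ j h2).mp hp)⟩
  · rintro ⟨hj, hq⟩
    have h2 : j + 2 < n := by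
      rcases hq with hq | hq <;>
        · rw [occ_at, hlen] at hq
          exact hq.1
    exact ⟨by omega, (key312 π h₁ h₂ j h2).mpr ((rhs_decode π j h2).mp hq)⟩
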